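/- Let (0; m_1, m_2, m_3, m_4) be a signature with each m_i ≥ 2, not all m_i equal to 2, such that for every prime p, the p-localization of the signature is non-degenerate (i.e., if the set of m_i divisible by p is nonempty, it has size at least 3, or size 2 with equal p-parts). Then the hyperbolic area μ = 2π(-2 + Σ_{i=1}^4 (1 - 1/m_i)) satisfies μ ≥ π/2, with equality exactly for the signature (0; 2,2,2,4) up to ordering. -/
import Mathlib


/-- A genus-0 signature (0; m_1, m_2, m_3, m_4) with all m_i ≥ 2, not all
equal to 2, whose p-localization is non-degenerate for every prime p, has hyperbolic
area μ = 2π(-2 + Σ(1 - 1/m_i)) ≥ π/2, with equality exactly for (0; 2,2,2,4) up to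
ordering. -/
theorem genus_zero_four_periods_area_bound (m : Fin 4 → ℕ)
    (hm : ∀ i, 2 ≤ m i) (hnotall : ¬ ∀ i, m i = 2)
    (hadm : ∀ p : ℕ, p.Prime → (∃ i, p ∣ m i) →
      (3 ≤ (Finset.univ.filter fun i => p ∣ m i).card ∨
        ((Finset.univ.filter fun i => p ∣ m i).card = 2 ∧
          ∀ i j, p ∣ m i → p ∣ m j →
            p ^ (m i).factorization p = p ^ (m j).factorization p))) :
    Real.pi / 2 ≤ 2 * Real.pi * (-2 + ∑ i, (1 - 1 / (m i : ℝ))) ∧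
      (2 * Real.pi * (-2 + ∑ i, (1 - 1 / (m i : ℝ))) = Real.pi / 2 ↔
        Multiset.map m Finset.univ.val = ({2, 2, 2, 4} : Multiset ℕ)) := by
  classical
  set s : ℝ := ∑ i, 1 / (m i : ℝ) with hs
  have hsum : (-2 + ∑ i, (1 - 1 / (m i : ℝ))) = 2 - s := by
    rw [Finset.sum_sub_distrib]
    simp [hs, Finset.card_univ]
    ring
  -- multiset equality implies the sum value
  have hms : Multiset.map m Finset.univ.val = ({2,2,2,4} : Multiset ℕ) → s = 7/4 := by
    intro h
    have h1 : s = ((Multiset.map m Finset.univ.val).map (fun n : ℕ => 1/(n:ℝ))).sum := by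
      rw [Multiset.map_map]; rfl
    rw [h1, h]
    norm_num
  have h2le : ∀ i, 1/(m i : ℝ) ≤ 1/2 := fun i =>
    one_div_le_one_div_of_le (by norm_num) (by exact_mod_cast hm i)
  set T := Finset.univ.filter (fun i => 2 < m i) with hT
  have hTne : T.Nonempty := by
    rcases not_forall.mp hnotall with ⟨j, hj⟩
    exact ⟨j, Finset.mem_filter.mpr ⟨Finset.mem_univ j, lt_of_le_of_ne (hm j) (Ne.symm hj)⟩⟩
  have key : s ≤ 7/4 ∧ (s = 7/4 → Multiset.map m Finset.univ.val = ({2,2,2,4} : Multiset ℕ)) := by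
    by_cases hcard : 2 ≤ T.card
    · -- two indices with m ≥ 3 : s ≤ 5/3
      obtain ⟨i, hi, j, hj, hij⟩ := Finset.one_lt_card.mp hcard
      have hmi : 2 < m i := (Finset.mem_filter.mp hi).2
      have hmj : 2 < m j := (Finset.mem_filter.mp hj).2
      have hsub : ({i, j} : Finset (Fin 4)) ⊆ Finset.univ := Finset.subset_univ _
      have hsplit : ∑ k ∈ Finset.univ \ {i,j}, 1/(m k:ℝ) + ∑ k ∈ ({i,j} : Finset (Fin 4)), 1/(m k:ℝ) = s :=
        Finset.sum_sdiff hsub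
      have hpair : ∑ k ∈ ({i,j} : Finset (Fin 4)), 1/(m k:ℝ) ≤ 2/3 := by
        rw [Finset.sum_pair hij]
        have h1 : 1/(m i:ℝ) ≤ 1/3 := one_div_le_one_div_of_le (by norm_num) (by exact_mod_cast hmi)
        have h2 : 1/(m j:ℝ) ≤ 1/3 := one_div_le_one_div_of_le (by norm_num) (by exact_mod_cast hmj)
        linarith
      have hrest : ∑ k ∈ Finset.univ \ {i,j}, 1/(m k:ℝ) ≤ 1 := by
        have hcard2 : (Finset.univ \ ({i,j} : Finset (Fin 4))).card = 2 := by
          rw [Finset.card_sdiff_of_subset hsub, Finset.card_pair hij]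
          simp
        calc ∑ k ∈ Finset.univ \ {i,j}, 1/(m k:ℝ)
            ≤ (Finset.univ \ ({i,j} : Finset (Fin 4))).card • (1/2 : ℝ) :=
              Finset.sum_le_card_nsmul _ _ _ (fun k _ => h2le k)
          _ = 1 := by rw [hcard2]; norm_num
      have hslt : s ≤ 5/3 := by rw [← hsplit]; linarith
      exact ⟨by linarith, fun h => absurd h (by intro h'; linarith)⟩
    · -- exactly one index with m > 2
      obtain ⟨j, hTj⟩ := Finset.card_eq_one.mp (le_antisymm (by omega) hTne.card_pos)
      have hmj : 2 < m j := by
        have : j ∈ T := hTj ▸ Finset.mem_singleton_self j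
        exact (Finset.mem_filter.mp this).2
      have hother : ∀ i, i ≠ j → m i = 2 := by
        intro i hij
        by_contra h
        have : i ∈ T := Finset.mem_filter.mpr ⟨Finset.mem_univ i, lt_of_le_of_ne (hm i) (Ne.symm h)⟩
        rw [hTj, Finset.mem_singleton] at this
        exact hij this
      have hne3 : m j ≠ 3 := by
        intro h3
        have hdvd : ∃ i, 3 ∣ m i := ⟨j, by rw [h3]⟩
        have hfilter : (Finset.univ.filter fun i => 3 ∣ m i) = {j} := by
          ext i
          simp only [Finset.mem_filter, Finset.mem_univ, true_and, Finset.mem_singleton]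
          constructor
          · intro hd
            by_contra hij
            rw [hother i hij] at hd
            omega
          · intro h; subst h; rw [h3]
        rcases hadm 3 (by norm_num) hdvd with h | ⟨h, _⟩ <;>
          rw [hfilter, Finset.card_singleton] at h <;> omega
      have h4 : 4 ≤ m j := by omega
      have hrest : ∑ i ∈ Finset.univ.erase j, 1/(m i:ℝ) = 3/2 := by
        have hconst : ∀ i ∈ Finset.univ.erase j, 1/(m i:ℝ) = 1/2 := by
          intro i hi
          rw [hother i (Finset.mem_erase.mp hi).1]
          norm_num
        rw [Finset.sum_congr rfl hconst, Finset.sum_const]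
        have hc : (Finset.univ.erase j).card = 3 := by
          rw [Finset.card_erase_of_mem (Finset.mem_univ j)]
          simp
        rw [hc]; norm_num
      have hssum : s = 1/(m j:ℝ) + 3/2 := by
        rw [hs, ← Finset.add_sum_erase _ _ (Finset.mem_univ j), hrest]
      have hmjle : 1/(m j:ℝ) ≤ 1/4 := one_div_le_one_div_of_le (by norm_num) (by exact_mod_cast h4)
      refine ⟨by rw [hssum]; linarith, ?_⟩
      intro heq
      have hmj4 : (m j : ℝ) = 4 := by
        rw [hssum] at heq
        have hne : (m j : ℝ) ≠ 0 := by positivity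
        field_simp at heq
        linarith
      have hmj4' : m j = 4 := by exact_mod_cast hmj4
      have hvals : ∀ i, m i = if i = j then 4 else 2 := by
        intro i
        by_cases h : i = j
        · subst h; simp [hmj4']
        · simp [h, hother i h]
      have huniv : (Finset.univ : Finset (Fin 4)).val = ({0,1,2,3} : Multiset (Fin 4)) := by decide
      rw [huniv]
      simp only [Multiset.insert_eq_cons, Multiset.map_cons, Multiset.map_singleton]
      rw [hvals 0, hvals 1, hvals 2, hvals 3]
      fin_cases j <;> decide
  obtain ⟨hle, himp⟩ := key
  have hπ := Real.pi_pos
  constructor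
  · rw [hsum]; nlinarith
  · rw [hsum]
    constructor
    · intro h
      apply himp
      have h2 : Real.pi * (2*(2-s)) = Real.pi * (1/2) := by linear_combination h
      have := mul_left_cancel₀ Real.pi_ne_zero h2
      linarith
    · intro h
      rw [hms h]
      ring
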